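/- Correctness of the mod-s test for input components of equal size: Let s ≥ 2, let Λ_1, …, Λ_m be pairwise disjoint subsets of a finite set V, each of cardinality exactly s, and let C ⊆ V. For an assignment c : [m] → ℤ/sℤ define Σ_C(c) = Σ_{i=1}^m |Λ_i ∩ C| · c_i in ℤ/sℤ. Then: (i) if every Λ_i is either contained in C or disjoint from C, then Σ_C(c) = 0 for every assignment c; and (ii) if some i ∈ [m] satisfies 0 < |Λ_i ∩ C| < s, and the values c_1, …, c_m are independent and each uniform on {0, 1} ⊆ ℤ/sℤ, then the probability that Σ_C(c) = 0 is at most 1/2. -/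
import Mathlib


/-- Correctness of the mod-`s` test for input components of
equal size `s ≥ 2`: (i) if every component `Λ i` is contained in `C` or disjoint
from `C`, the aggregated value `Σ_i |Λ i ∩ C| · c i` (in `ℤ/sℤ`) is `0` for every
assignment `c`; (ii) if some `Λ i` is split by `C` (i.e. `0 < |Λ i ∩ C| < s`),
then for independent fair coins `c i ∈ {0, 1} ⊆ ℤ/sℤ` the probability that the
aggregated value is `0` is at most `1/2`. -/
theorem mod_s_test_correctness {V : Type*} [Fintype V] [DecidableEq V]
    (s : ℕ) (hs : 2 ≤ s) (m : ℕ) (Λ : Fin m → Finset V)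
    (hpd : ∀ i j : Fin m, i ≠ j → Disjoint (Λ i) (Λ j))
    (hcard : ∀ i : Fin m, (Λ i).card = s)
    (C : Finset V) :
    ((∀ i : Fin m, Λ i ⊆ C ∨ Disjoint (Λ i) C) →
      ∀ c : Fin m → ZMod s,
        ∑ i : Fin m, ((Λ i ∩ C).card : ZMod s) * c i = 0) ∧
    ((∃ i : Fin m, 0 < (Λ i ∩ C).card ∧ (Λ i ∩ C).card < s) →
      ((Finset.univ.filter (fun b : Fin m → Bool =>
            ∑ i : Fin m, ((Λ i ∩ C).card : ZMod s) * (if b i then 1 else 0) = 0)).card : ℝ) /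
          ((Finset.univ : Finset (Fin m → Bool)).card : ℝ) ≤ 1 / 2) := by
  have hsne : NeZero s := ⟨by omega⟩
  constructor
  · intro h c
    apply Finset.sum_eq_zero
    intro i _
    rcases h i with hsub | hdis
    · have : Λ i ∩ C = Λ i := Finset.inter_eq_left.mpr hsub
      rw [this, hcard i]
      simp [ZMod.natCast_self]
    · have : Λ i ∩ C = ∅ := Finset.disjoint_iff_inter_eq_empty.mp
        (Finset.disjoint_left.mpr (fun a ha => Finset.disjoint_left.mp hdis ha))
      simp [this]
  · rintro ⟨i, hpos, hlt⟩
    set coef : Fin m → ZMod s := fun j => ((Λ j ∩ C).card : ZMod s) with hcoef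
    have ha : coef i ≠ 0 := by
      rw [hcoef]
      simp only [Ne, ZMod.natCast_eq_zero_iff]
      intro hdvd
      exact absurd (Nat.le_of_dvd hpos hdvd) (not_le.mpr hlt)
    set g : (Fin m → Bool) → ZMod s :=
      fun b => ∑ j : Fin m, coef j * (if b j then 1 else 0) with hg
    set S := Finset.univ.filter (fun b : Fin m → Bool => g b = 0) with hS
    set T := Finset.univ.filter (fun b : Fin m → Bool => ¬ g b = 0) with hT
    -- flipping bit i
    set f : (Fin m → Bool) → (Fin m → Bool) :=
      fun b => Function.update b i (!b i) with hf
    have hgupd : ∀ (b : Fin m → Bool) (x : Bool),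
        g (Function.update b i x) =
          coef i * (if x then 1 else 0) + ∑ j ∈ Finset.univ.erase i,
            coef j * (if b j then 1 else 0) := by
      intro b x
      have hrfl : g (Function.update b i x) =
          ∑ j : Fin m, coef j * (if Function.update b i x j then 1 else 0) := rfl
      rw [hrfl, ← Finset.add_sum_erase _ _ (Finset.mem_univ i)]
      simp only [Function.update_self]
      congr 1
      apply Finset.sum_congr rfl
      intro j hj
      rw [Function.update_of_ne (Finset.ne_of_mem_erase hj)]
    have hgsplit : ∀ b : Fin m → Bool,
        g b = coef i * (if b i then 1 else 0) + ∑ j ∈ Finset.univ.erase i,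
            coef j * (if b j then 1 else 0) := by
      intro b
      have := hgupd b (b i)
      rwa [Function.update_eq_self] at this
    have hmaps : ∀ b ∈ S, f b ∈ T := by
      intro b hb
      rw [hS, Finset.mem_filter] at hb
      rw [hT, Finset.mem_filter]
      refine ⟨Finset.mem_univ _, fun hc => ha ?_⟩
      have h0 := hb.2
      rw [hgsplit b] at h0
      have hc' : g (Function.update b i (!b i)) = 0 := hc
      rw [hgupd b (!b i)] at hc'
      cases hbi : b i <;> rw [hbi] at h0 hc' <;>
        simp only [Bool.not_false, Bool.not_true, if_true, if_false, mul_one, mul_zero,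
          zero_add, add_zero, Bool.false_eq_true, Bool.true_eq_false] at h0 hc'
      · linear_combination hc' - h0
      · linear_combination h0 - hc'
    have hinj : Set.InjOn f S := by
      intro b1 _ b2 _ heq
      funext j
      by_cases hj : j = i
      · subst hj
        have := congrFun heq j
        rw [hf] at this
        simp only [Function.update_self] at this
        exact Bool.not_inj this
      · have := congrFun heq j
        rw [hf] at this
        simpa [Function.update_of_ne hj] using this
    have hle : S.card ≤ T.card := Finset.card_le_card_of_injOn f hmaps hinj
    have hsum : S.card + T.card = (Finset.univ : Finset (Fin m → Bool)).card := by
      rw [hS, hT]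
      exact Finset.card_filter_add_card_filter_not _
    have hU : (0:ℝ) < ((Finset.univ : Finset (Fin m → Bool)).card : ℝ) := by
      have : 0 < (Finset.univ : Finset (Fin m → Bool)).card :=
        Finset.card_pos.mpr ⟨fun _ => true, Finset.mem_univ _⟩
      exact_mod_cast this
    rw [div_le_div_iff₀ hU (by norm_num)]
    have : 2 * S.card ≤ (Finset.univ : Finset (Fin m → Bool)).card := by omega
    calc (S.card : ℝ) * 2 = 2 * S.card := by ring
      _ ≤ ((Finset.univ : Finset (Fin m → Bool)).card : ℝ) := by exact_mod_cast this
      _ = 1 * _ := by ring
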